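/- Let W, V be vector spaces with quasi-norms |·|_W, |·|_V, and let T : W → V satisfy the quasi-additivity condition |T(f+g)|_V ≤ K(|T(f)|_V + |T(g)|_V) for all f, g ∈ W and some constant K ≥ 1, and suppose T is continuous at zero (for each ε>0 there is δ>0 with |f|_W < δ ⟹ |T(f)|_V < ε). Let α > 0 satisfy (2K)^α = 2. Then for every series ∑_{j∈ℤ} f_j converging in W, one has |T(∑_j f_j)|_V^α ≤ 4 ∑_j |T(f_j)|_V^α. -/

import Mathlib

set_option linter.unusedSectionVars false

section auxhelper
variable {W : Type*} [AddCommGroup W]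
variable {W : Type*} [AddCommGroup W]

lemma exists_max_snd (l : Multiset (W × ℝ)) (hl : l ≠ 0) : ∃ p ∈ l, ∀ q ∈ l, q.2 ≤ p.2 := by
  induction l using Multiset.induction_on with
  | empty => simp at hl
  | cons a s ih =>
    rcases eq_or_ne s 0 with rfl | hs
    · exact ⟨a, by simp, by simp⟩
    · obtain ⟨p, hp, hmax⟩ := ih hs
      rcases le_total a.2 p.2 with h | h
      · refine ⟨p, Multiset.mem_cons_of_mem hp, ?_⟩
        intro q hq
        rcases Multiset.mem_cons.mp hq with rfl | hq
        · exact h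
        · exact hmax q hq
      · refine ⟨a, Multiset.mem_cons_self _ _, ?_⟩
        intro q hq
        rcases Multiset.mem_cons.mp hq with rfl | hq
        · exact le_refl _
        · exact (hmax q hq).trans h

lemma sort_lemma (φ : W → ℝ) (hφ : ∀ x y, φ (x + y) ≤ 2 * max (φ x) (φ y)) :
    ∀ n : ℕ, ∀ l : Multiset (W × ℝ), Multiset.card l ≤ n → l ≠ 0 →
    (∀ p ∈ l, φ p.1 ≤ p.2 ∧ ∃ e : ℤ, p.2 = (2:ℝ) ^ e) →
    (l.map Prod.snd).Nodup →
    ∀ B : ℝ, (∃ e : ℤ, B = (2:ℝ) ^ e) → (∀ p ∈ l, p.2 ≤ B) →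
    φ (l.map Prod.fst).sum ≤ 2 * B := by
  intro n
  induction n with
  | zero =>
    intro l hcard hl _ _ _ _ _
    simp only [Nat.le_zero, Multiset.card_eq_zero] at hcard
    exact absurd hcard hl
  | succ n ih =>
    intro l hcard hl hconds hnodup B hBpow hBle
    classical
    obtain ⟨eB, rfl⟩ := hBpow
    have hBpos : (0:ℝ) < (2:ℝ) ^ eB := zpow_pos (by norm_num) _
    obtain ⟨p, hp, hmax⟩ := exists_max_snd l hl
    have hlp : l = p ::ₘ l.erase p := (Multiset.cons_erase hp).symm
    rcases eq_or_ne (l.erase p) 0 with hrest | hrest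
    · -- singleton
      have : φ (l.map Prod.fst).sum = φ p.1 := by
        rw [hlp, hrest]; simp
      rw [this]
      have h1 := (hconds p hp).1
      have h2 := hBle p hp
      linarith
    · -- extract the maximal element
      set rest := l.erase p with hrestdef
      obtain ⟨ep, hpe⟩ := (hconds p hp).2
      -- budgets of rest are ≤ p.2 / 2
      have hnodup' : ((p ::ₘ rest).map Prod.snd).Nodup := by rw [← hlp]; exact hnodup
      rw [Multiset.map_cons, Multiset.nodup_cons] at hnodup'
      have hrestle : ∀ q ∈ rest, q.2 ≤ p.2 / 2 := by
        intro q hq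
        obtain ⟨eq', hqe⟩ := (hconds q (Multiset.mem_of_mem_erase hq)).2
        have hqlep : q.2 ≤ p.2 := hmax q (Multiset.mem_of_mem_erase hq)
        have hne : q.2 ≠ p.2 := by
          intro h
          exact hnodup'.1 (by rw [← h]; exact Multiset.mem_map_of_mem _ hq)
        have : eq' < ep := by
          have := lt_of_le_of_ne hqlep hne
          rw [hqe, hpe] at this
          exact (zpow_lt_zpow_iff_right₀ (by norm_num : (1:ℝ) < 2)).mp this
        have : eq' ≤ ep - 1 := by omega
        rw [hqe, hpe]
        calc (2:ℝ) ^ eq' ≤ (2:ℝ) ^ (ep - 1) :=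
              (zpow_le_zpow_iff_right₀ (by norm_num : (1:ℝ) < 2)).mpr this
          _ = (2:ℝ) ^ ep / 2 := by rw [zpow_sub₀ (by norm_num), zpow_one]
      have hcardrest : Multiset.card rest ≤ n := by
        have h := Multiset.card_erase_of_mem hp
        rw [← hrestdef, Nat.pred_eq_sub_one] at h
        omega
      have hppos : (0:ℝ) < p.2 := by rw [hpe]; exact zpow_pos (by norm_num) _
      have hrestbd : φ (rest.map Prod.fst).sum ≤ 2 * (p.2 / 2) := by
        refine ih rest hcardrest hrest (fun q hq => hconds q (Multiset.mem_of_mem_erase hq))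
          hnodup'.2 (p.2 / 2) ⟨ep - 1, by rw [hpe, zpow_sub₀ (by norm_num), zpow_one]⟩ hrestle
      have hsum : (l.map Prod.fst).sum = p.1 + (rest.map Prod.fst).sum := by
        conv_lhs => rw [hlp]
        simp
      rw [hsum]
      have h1 := hφ p.1 (rest.map Prod.fst).sum
      have h2 := (hconds p hp).1
      have hBp : p.2 ≤ (2:ℝ) ^ eB := hBle p hp
      have : max (φ p.1) (φ (rest.map Prod.fst).sum) ≤ p.2 := by
        apply max_le (h2.trans (le_refl _))
        linarith
      linarith [mul_le_mul_of_nonneg_left this (by norm_num : (0:ℝ) ≤ 2)]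


lemma aux_lemma (φ : W → ℝ) (hφ : ∀ x y, φ (x + y) ≤ 2 * max (φ x) (φ y)) :
    ∀ n : ℕ, ∀ l : Multiset (W × ℝ), Multiset.card l ≤ n → l ≠ 0 →
    (∀ p ∈ l, φ p.1 ≤ p.2 ∧ ∃ e : ℤ, p.2 = (2:ℝ) ^ e) →
    φ (l.map Prod.fst).sum ≤ 2 * (l.map Prod.snd).sum := by
  intro n
  induction n with
  | zero =>
    intro l hcard hl _
    simp only [Nat.le_zero, Multiset.card_eq_zero] at hcard
    exact absurd hcard hl
  | succ n ih =>
    intro l hcard hl hconds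
    classical
    by_cases hnodup : (l.map Prod.snd).Nodup
    · obtain ⟨p, hp, hmax⟩ := exists_max_snd l hl
      have hBpow : ∃ e : ℤ, p.2 = (2:ℝ) ^ e := (hconds p hp).2
      have h1 := sort_lemma φ hφ (n+1) l hcard hl hconds hnodup p.2 hBpow
        (fun q hq => hmax q hq)
      refine h1.trans ?_
      have hnn : ∀ b ∈ l.map Prod.snd, (0:ℝ) ≤ b := by
        intro b hb
        obtain ⟨q, hq, rfl⟩ := Multiset.mem_map.mp hb
        obtain ⟨e, he⟩ := (hconds q hq).2
        rw [he]; positivity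
      have : p.2 ≤ (l.map Prod.snd).sum :=
        Multiset.single_le_sum hnn _ (Multiset.mem_map_of_mem _ hp)
      linarith
    · -- two equal budgets: merge them
      rw [Multiset.nodup_iff_count_le_one] at hnodup
      push_neg at hnodup
      obtain ⟨b, hb2⟩ := hnodup
      have hb1 : b ∈ l.map Prod.snd := Multiset.count_pos.mp (by omega)
      obtain ⟨p, hp, hpb⟩ := Multiset.mem_map.mp hb1
      have hlp : l = p ::ₘ l.erase p := (Multiset.cons_erase hp).symm
      have hcount : 2 ≤ Multiset.count b (Prod.snd p ::ₘ (l.erase p).map Prod.snd) := by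
        rw [← Multiset.map_cons, ← hlp]; omega
      rw [Multiset.count_cons, if_pos hpb.symm] at hcount
      have hb1' : b ∈ (l.erase p).map Prod.snd := Multiset.count_pos.mp (by omega)
      obtain ⟨q, hq, hqb⟩ := Multiset.mem_map.mp hb1'
      set rest := (l.erase p).erase q with hrestdef
      have hlq : l.erase p = q ::ₘ rest := (Multiset.cons_erase hq).symm
      have hmemq : q ∈ l := Multiset.mem_of_mem_erase hq
      have hmemrest : ∀ r ∈ rest, r ∈ l := fun r hr =>
        Multiset.mem_of_mem_erase (Multiset.mem_of_mem_erase hr)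
      obtain ⟨e, he⟩ := (hconds p hp).2
      -- new multiset
      set l' : Multiset (W × ℝ) := (p.1 + q.1, 2 * b) ::ₘ rest with hl'def
      have hcard' : Multiset.card l' ≤ n := by
        have h1 : Multiset.card (l.erase p) = (Multiset.card l).pred :=
          Multiset.card_erase_of_mem hp
        have h2 : Multiset.card rest = (Multiset.card (l.erase p)).pred := by
          rw [hrestdef]; exact Multiset.card_erase_of_mem hq
      -- card l ≥ 2 since it contains p and q distinctly
        have h4 : 2 ≤ Multiset.card l := by
          rw [hlp, Multiset.card_cons, hlq, Multiset.card_cons]; omega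
        rw [hl'def, Multiset.card_cons]
        rw [Nat.pred_eq_sub_one] at h1 h2
        omega
      have hconds' : ∀ r ∈ l', φ r.1 ≤ r.2 ∧ ∃ e : ℤ, r.2 = (2:ℝ) ^ e := by
        intro r hr
        rcases Multiset.mem_cons.mp hr with rfl | hr
        · constructor
          · have h1 := (hconds p hp).1
            have h2 := (hconds q hmemq).1
            have := hφ p.1 q.1
            have hmax : max (φ p.1) (φ q.1) ≤ b := by
              apply max_le <;> [exact h1.trans_eq hpb; exact h2.trans_eq hqb]
            calc φ (p.1 + q.1) ≤ 2 * max (φ p.1) (φ q.1) := hφ p.1 q.1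
              _ ≤ 2 * b := by linarith
          · exact ⟨e + 1, by rw [zpow_add_one₀ (by norm_num : (2:ℝ) ≠ 0), ← he, hpb]; ring⟩
        · exact hconds r (hmemrest r hr)
      have h5 : l' ≠ 0 := Multiset.cons_ne_zero
      have hIH := ih l' hcard' h5 hconds'
      -- translate sums
      have hfst : (l.map Prod.fst).sum = (l'.map Prod.fst).sum := by
        rw [hlp, hlq, hl'def]
        simp only [Multiset.map_cons, Multiset.sum_cons]
        abel
      have hsnd : (l.map Prod.snd).sum = (l'.map Prod.snd).sum := by
        rw [hlp, hlq, hl'def]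
        simp only [Multiset.map_cons, Multiset.sum_cons]
        rw [hpb, hqb]; ring
      rw [hfst, hsnd]
      exact hIH

lemma main_lemma (φ : W → ℝ) (hφ0 : ∀ w, 0 ≤ φ w)
    (hφ : ∀ x y, φ (x + y) ≤ 2 * max (φ x) (φ y)) (l : Multiset W) (hl : l ≠ 0)
    (ε : ℝ) (hε : 0 < ε) : φ l.sum ≤ 4 * (l.map φ).sum + ε := by
  classical
  set n := Multiset.card l with hn
  have hnpos : 0 < n := Multiset.card_pos.mpr hl
  set ε' : ℝ := ε / (4 * n) with hε'
  have hε'pos : 0 < ε' := by positivity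
  set bud : W → ℝ := fun w => (2:ℝ) ^ (⌈Real.logb 2 (φ w + ε')⌉) with hbud
  have hbud1 : ∀ w, φ w ≤ bud w := by
    intro w
    have hc : 0 < φ w + ε' := by have := hφ0 w; linarith
    have h1 : (φ w + ε') = (2:ℝ) ^ (Real.logb 2 (φ w + ε')) :=
      (Real.rpow_logb (by norm_num) (by norm_num) hc).symm
    have h2 : (2:ℝ) ^ (Real.logb 2 (φ w + ε')) ≤ (2:ℝ) ^ ((⌈Real.logb 2 (φ w + ε')⌉ : ℤ) : ℝ) :=
      Real.rpow_le_rpow_of_exponent_le (by norm_num) (Int.le_ceil _)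
    have := hφ0 w
    calc φ w ≤ φ w + ε' := by linarith
      _ = (2:ℝ) ^ (Real.logb 2 (φ w + ε')) := h1
      _ ≤ (2:ℝ) ^ ((⌈Real.logb 2 (φ w + ε')⌉ : ℤ) : ℝ) := h2
      _ = bud w := by rw [hbud, Real.rpow_intCast]
  have hbud2 : ∀ w, bud w ≤ 2 * (φ w + ε') := by
    intro w
    have hc : 0 < φ w + ε' := by have := hφ0 w; linarith
    have h2 : (2:ℝ) ^ ((⌈Real.logb 2 (φ w + ε')⌉ : ℤ) : ℝ) ≤
        (2:ℝ) ^ (Real.logb 2 (φ w + ε') + 1) :=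
      Real.rpow_le_rpow_of_exponent_le (by norm_num) (Int.ceil_lt_add_one _).le
    have h3 : (2:ℝ) ^ (Real.logb 2 (φ w + ε') + 1) = 2 * (φ w + ε') := by
      rw [Real.rpow_add (by norm_num), Real.rpow_one, Real.rpow_logb (by norm_num) (by norm_num) hc]
      ring
    rw [hbud]
    calc (2:ℝ) ^ (⌈Real.logb 2 (φ w + ε')⌉ : ℤ)
        = (2:ℝ) ^ ((⌈Real.logb 2 (φ w + ε')⌉ : ℤ) : ℝ) := (Real.rpow_intCast _ _).symm
      _ ≤ (2:ℝ) ^ (Real.logb 2 (φ w + ε') + 1) := h2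
      _ = 2 * (φ w + ε') := h3
  set l' : Multiset (W × ℝ) := l.map (fun w => (w, bud w)) with hl'
  have hl'0 : l' ≠ 0 := by
    rw [hl', Ne, Multiset.map_eq_zero]; exact hl
  have hconds : ∀ p ∈ l', φ p.1 ≤ p.2 ∧ ∃ e : ℤ, p.2 = (2:ℝ) ^ e := by
    intro p hp
    obtain ⟨w, hw, rfl⟩ := Multiset.mem_map.mp hp
    exact ⟨hbud1 w, ⟨_, rfl⟩⟩
  have hkey := aux_lemma φ hφ (Multiset.card l') l' (le_refl _) hl'0 hconds
  have hfst : (l'.map Prod.fst).sum = l.sum := by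
    rw [hl', Multiset.map_map]
    simp
  have hsnd : (l'.map Prod.snd).sum ≤ 2 * (l.map φ).sum + ε / 2 := by
    have hml : l'.map Prod.snd = l.map bud := by
      rw [hl', Multiset.map_map]; rfl
    rw [hml]
    have h1 : ((l.map bud).sum) ≤ ((l.map fun w => 2 * φ w + 2 * ε').sum) := by
      apply Multiset.sum_map_le_sum_map
      intro w _
      have := hbud2 w
      linarith
    have h2 : ((l.map fun w => 2 * φ w + 2 * ε').sum)
        = 2 * (l.map φ).sum + n * (2 * ε') := by
      rw [Multiset.sum_map_add]
      congr 1
      · rw [Multiset.sum_map_mul_left]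
      · rw [Multiset.map_const', Multiset.sum_replicate, ← hn, nsmul_eq_mul]
    have h3 : (n : ℝ) * (2 * ε') = ε / 2 := by
      rw [hε']
      field_simp
      ring
    calc (l.map bud).sum
        ≤ 2 * (l.map φ).sum + n * (2 * ε') := h1.trans_eq h2
      _ = 2 * (l.map φ).sum + ε / 2 := by rw [h3]
  rw [hfst] at hkey
  calc φ l.sum ≤ 2 * (l'.map Prod.snd).sum := hkey
    _ ≤ 2 * (2 * (l.map φ).sum + ε / 2) := by linarith
    _ = 4 * (l.map φ).sum + ε := by ring


end auxhelper

open Filter Topology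

/-- A quasi-additive map between quasi-normed spaces that is continuous at zero is
countably `α`-quasi-additive with constant `4`, where `(2K)^α = 2`. -/
theorem stmt4 {W V : Type*} [AddCommGroup W] [Module ℝ W] [AddCommGroup V] [Module ℝ V]
    -- quasi-norms on `W` and `V`
    (nW : W → ℝ) (nV : V → ℝ)
    (hnW0 : ∀ w, 0 ≤ nW w) (hnWtri : ∃ CW ≥ (1 : ℝ), ∀ w w', nW (w + w') ≤ CW * (nW w + nW w'))
    (hnV0 : ∀ v, 0 ≤ nV v) (hnVtri : ∃ CV ≥ (1 : ℝ), ∀ v v', nV (v + v') ≤ CV * (nV v + nV v'))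
    (T : W → V) (K : ℝ) (hK : 1 ≤ K)
    -- quasi-additivity of `T`
    (hquasi : ∀ f g : W, nV (T (f + g)) ≤ K * (nV (T f) + nV (T g)))
    -- continuity at zero
    (hcont : ∀ ε > (0 : ℝ), ∃ δ > (0 : ℝ), ∀ f : W, nW f < δ → nV (T f) < ε)
    (α : ℝ) (hα : 0 < α) (hKα : (2 * K) ^ α = 2)
    (f : ℤ → W) (g : W)
    -- the series `∑_{j ∈ ℤ} f_j` converges to `g` in the quasi-norm of `W`
    (hconv : Tendsto (fun N : ℕ => nW (g - ∑ j ∈ Finset.Icc (-(N : ℤ)) (N : ℤ), f j))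
      atTop (𝓝 0)) :
    ENNReal.ofReal (nV (T g) ^ α) ≤ 4 * ∑' j : ℤ, ENNReal.ofReal (nV (T (f j)) ^ α) := by
  classical
  let φ : W → ℝ := fun w => nV (T w) ^ α
  have hφ0 : ∀ w, 0 ≤ φ w := fun w => Real.rpow_nonneg (hnV0 _) _
  have h2K : (0:ℝ) ≤ 2 * K := by linarith
  have hφmax : ∀ x y, φ (x + y) ≤ 2 * max (φ x) (φ y) := by
    intro x y
    have ha := hnV0 (T x); have hb := hnV0 (T y)
    have h2 : nV (T x) + nV (T y) ≤ 2 * max (nV (T x)) (nV (T y)) := by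
      rcases le_total (nV (T x)) (nV (T y)) with h | h
      · rw [max_eq_right h]; linarith
      · rw [max_eq_left h]; linarith
    have h1 : nV (T (x + y)) ≤ (2 * K) * max (nV (T x)) (nV (T y)) :=
      calc nV (T (x+y)) ≤ K * (nV (T x) + nV (T y)) := hquasi x y
        _ ≤ K * (2 * max (nV (T x)) (nV (T y))) := by
            apply mul_le_mul_of_nonneg_left h2; linarith
        _ = (2 * K) * max (nV (T x)) (nV (T y)) := by ring
    have hmaxnn : 0 ≤ max (nV (T x)) (nV (T y)) := le_trans ha (le_max_left _ _)
    calc φ (x + y) = nV (T (x+y)) ^ α := rfl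
      _ ≤ ((2*K) * max (nV (T x)) (nV (T y))) ^ α := Real.rpow_le_rpow (hnV0 _) h1 hα.le
      _ = (2*K)^α * (max (nV (T x)) (nV (T y)))^α := Real.mul_rpow h2K hmaxnn
      _ = 2 * (max (nV (T x)) (nV (T y)))^α := by rw [hKα]
      _ = 2 * max (φ x) (φ y) := by
          congr 1
          rcases le_total (nV (T x)) (nV (T y)) with h | h
          · rw [max_eq_right h]
            exact (max_eq_right (Real.rpow_le_rpow ha h hα.le)).symm
          · rw [max_eq_left h]
            exact (max_eq_left (Real.rpow_le_rpow hb h hα.le)).symm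
  show ENNReal.ofReal (φ g) ≤ 4 * ∑' j : ℤ, ENNReal.ofReal (φ (f j))
  apply ENNReal.le_of_forall_pos_le_add
  intro ε hε _
  have hεR : (0:ℝ) < (ε:ℝ) := hε
  set ε₀ : ℝ := ((ε:ℝ)/8) ^ (α⁻¹ : ℝ) with hε₀
  have hε₀pos : 0 < ε₀ := Real.rpow_pos_of_pos (by positivity) _
  obtain ⟨δ, hδ, hδprop⟩ := hcont ε₀ hε₀pos
  have hev : ∀ᶠ N : ℕ in atTop, nW (g - ∑ j ∈ Finset.Icc (-(N:ℤ)) (N:ℤ), f j) < δ :=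
    hconv.eventually (gt_mem_nhds hδ)
  obtain ⟨N, hN⟩ := hev.exists
  set tail : W := g - ∑ j ∈ Finset.Icc (-(N:ℤ)) (N:ℤ), f j with htail
  have htail1 : nV (T tail) < ε₀ := hδprop _ hN
  have htail2 : φ tail ≤ (ε:ℝ)/8 := by
    have h : nV (T tail) ^ α ≤ ε₀ ^ α := Real.rpow_le_rpow (hnV0 _) htail1.le hα.le
    rwa [hε₀, Real.rpow_inv_rpow (by positivity) hα.ne'] at h
  set m : Multiset W := tail ::ₘ ((Finset.Icc (-(N:ℤ)) (N:ℤ)).val.map f) with hm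
  have hmsum : m.sum = g := by
    rw [hm, Multiset.sum_cons]
    have : ((Finset.Icc (-(N:ℤ)) (N:ℤ)).val.map f).sum
        = ∑ j ∈ Finset.Icc (-(N:ℤ)) (N:ℤ), f j := rfl
    rw [this, htail]; abel
  have hmain := main_lemma φ hφ0 hφmax m (Multiset.cons_ne_zero) ((ε:ℝ)/2) (by positivity)
  rw [hmsum] at hmain
  have hmapsum : (m.map φ).sum = φ tail + ∑ j ∈ Finset.Icc (-(N:ℤ)) (N:ℤ), φ (f j) := by
    rw [hm, Multiset.map_cons, Multiset.sum_cons, Multiset.map_map]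
    rfl
  have hreal : φ g ≤ 4 * (∑ j ∈ Finset.Icc (-(N:ℤ)) (N:ℤ), φ (f j)) + (ε:ℝ) := by
    rw [hmapsum] at hmain; linarith
  calc ENNReal.ofReal (φ g)
      ≤ ENNReal.ofReal (4 * (∑ j ∈ Finset.Icc (-(N:ℤ)) (N:ℤ), φ (f j)) + (ε:ℝ)) :=
        ENNReal.ofReal_le_ofReal hreal
    _ ≤ ENNReal.ofReal (4 * (∑ j ∈ Finset.Icc (-(N:ℤ)) (N:ℤ), φ (f j)))
        + ENNReal.ofReal (ε:ℝ) := ENNReal.ofReal_add_le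
    _ = ENNReal.ofReal 4 * ENNReal.ofReal (∑ j ∈ Finset.Icc (-(N:ℤ)) (N:ℤ), φ (f j)) + ε := by
        rw [ENNReal.ofReal_mul (by norm_num), ENNReal.ofReal_coe_nnreal]
    _ = 4 * ∑ j ∈ Finset.Icc (-(N:ℤ)) (N:ℤ), ENNReal.ofReal (φ (f j)) + ε := by
        rw [ENNReal.ofReal_sum_of_nonneg (fun i _ => hφ0 _)]
        norm_num
    _ ≤ 4 * ∑' j : ℤ, ENNReal.ofReal (φ (f j)) + ε := by
        gcongr
        exact ENNReal.sum_le_tsum _
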